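/- For an abelian p-group A, each of the ideals T(A[p^n]) = {α ∈ End(A) : α(A[p^n]) = 0} is closed in the finite topology on End(A); consequently End(A) with the Liebert topology is a complete topological ring. -/

import Mathlib

/-- `liebertSet p A n` is `T(A[p^n]) = {α ∈ End A : α(A[p^n]) = 0}`. -/
def liebertSet (p : ℕ) (A : Type*) [AddCommGroup A] (n : ℕ) : Set (AddMonoid.End A) :=
  {α | ∀ a : A, p ^ n • a = 0 → α a = 0}

/-- The finite topology on the endomorphism ring of an abelian group: induced by the
inclusion into `A → A` where `A` carries the discrete topology. -/
def finTopEnd (A : Type*) [AddCommGroup A] : TopologicalSpace (AddMonoid.End A) :=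
  TopologicalSpace.induced (fun f => (f : A → A))
    (@Pi.topologicalSpace A (fun _ => A) (fun _ => ⊥))

/-- `liebertSet` as an additive subgroup of `End A`. -/
def liebertSubgroup (p : ℕ) (A : Type*) [AddCommGroup A] (n : ℕ) :
    AddSubgroup (AddMonoid.End A) where
  carrier := liebertSet p A n
  zero_mem' := fun a _ => rfl
  add_mem' := by
    intro α β hα hβ a ha
    have : (α + β) a = α a + β a := rfl
    rw [this, hα a ha, hβ a ha, add_zero]
  neg_mem' := by
    intro α hα a ha
    have : (-α) a = -(α a) := rfl
    rw [this, hα a ha, neg_zero]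

theorem liebert_antitone (p : ℕ) (A : Type*) [AddCommGroup A] {m n : ℕ} (h : m ≤ n) :
    liebertSubgroup p A n ≤ liebertSubgroup p A m := by
  intro α hα a ha
  refine hα a ?_
  have : p ^ n • a = p ^ (n - m) • p ^ m • a := by
    rw [← mul_smul, ← pow_add, Nat.sub_add_cancel h]
  rw [this, ha, smul_zero]

theorem liebert_ringSubgroupsBasis (p : ℕ) (A : Type*) [AddCommGroup A] :
    RingSubgroupsBasis (liebertSubgroup p A) := by
  constructor
  · intro i j
    exact ⟨max i j, le_inf (liebert_antitone p A (le_max_left i j))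
      (liebert_antitone p A (le_max_right i j))⟩
  · intro i
    refine ⟨i, ?_⟩
    rw [Set.mul_subset_iff]
    intro α hα β hβ a ha
    have : (α * β) a = α (β a) := rfl
    rw [this, hβ a ha, map_zero]
  · intro x i
    refine ⟨i, fun α hα => ?_⟩
    simp only [Set.mem_preimage, SetLike.mem_coe]
    intro b hb
    show x (α b) = 0
    rw [hα b hb, map_zero]
  · intro x i
    refine ⟨i, fun α hα => ?_⟩
    simp only [Set.mem_preimage, SetLike.mem_coe]
    intro b hb
    show α (x b) = 0
    refine hα (x b) ?_
    rw [← map_nsmul, hb, map_zero]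

theorem liebert_ideals_closed_and_complete (p : ℕ) (hp : p.Prime)
    (A : Type*) [AddCommGroup A] (hA : ∀ a : A, ∃ n : ℕ, p ^ n • a = 0) :
    (∀ n : ℕ, @IsClosed _ (finTopEnd A) (liebertSet p A n)) ∧
    ∃ u : UniformSpace (AddMonoid.End A),
      @IsUniformAddGroup (AddMonoid.End A) u _ ∧
      @IsTopologicalRing (AddMonoid.End A) u.toTopologicalSpace _ ∧
      (∀ s : Set (AddMonoid.End A),
        s ∈ @nhds _ u.toTopologicalSpace 0 ↔ ∃ n : ℕ, liebertSet p A n ⊆ s) ∧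
      @CompleteSpace (AddMonoid.End A) u := by
  constructor
  · -- closedness in the finite topology
    intro n
    letI : TopologicalSpace A := ⊥
    haveI : DiscreteTopology A := ⟨rfl⟩
    letI := finTopEnd A
    have hcont : ∀ a : A, Continuous fun α : AddMonoid.End A => α a := by
      intro a
      exact (continuous_apply a).comp continuous_induced_dom
    have : liebertSet p A n = ⋂ a ∈ {a : A | p ^ n • a = 0},
        {α : AddMonoid.End A | α a = 0} := by
      ext α
      simp [liebertSet]
    rw [this]
    refine isClosed_biInter fun a ha => ?_
    exact IsClosed.preimage (hcont a) (isClosed_discrete ({0} : Set A))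
  · -- the Liebert topology
    set B := liebertSubgroup p A with hBdef
    have hB := liebert_ringSubgroupsBasis p A
    letI t := hB.topology
    haveI htr : @IsTopologicalRing (AddMonoid.End A) t _ :=
      hB.toRingFilterBasis.isTopologicalRing
    haveI htg : @IsTopologicalAddGroup (AddMonoid.End A) t _ := inferInstance
    letI u : UniformSpace (AddMonoid.End A) := @IsTopologicalAddGroup.rightUniformSpace _ _ t _
    haveI hug : @IsUniformAddGroup (AddMonoid.End A) u _ :=
      @isUniformAddGroup_of_addCommGroup _ _ t _
    have hbasis := hB.hasBasis_nhds_zero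
    have hnhds : ∀ s : Set (AddMonoid.End A),
        s ∈ @nhds _ t 0 ↔ ∃ n : ℕ, liebertSet p A n ⊆ s := by
      intro s
      rw [hbasis.mem_iff]
      simp only [true_and]
      rfl
    refine ⟨u, hug, htr, hnhds, ?_⟩
    -- completeness
    constructor
    intro F hF
    -- for each n, there is a small set in F
    have key : ∀ n : ℕ, ∃ S ∈ F, ∀ α ∈ S, ∀ β ∈ S, β - α ∈ liebertSet p A n := by
      intro n
      have hU : ((fun q : (AddMonoid.End A) × (AddMonoid.End A) => q.2 - q.1) ⁻¹'
          (liebertSet p A n)) ∈ @uniformity _ u := by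
        rw [uniformity_eq_comap_nhds_zero]
        exact Filter.preimage_mem_comap ((hnhds _).mpr ⟨n, le_refl _⟩)
      have := hF.2 hU
      rw [Filter.mem_prod_iff] at this
      obtain ⟨S₁, hS₁, S₂, hS₂, hsub⟩ := this
      refine ⟨S₁ ∩ S₂, Filter.inter_mem hS₁ hS₂, fun α hα β hβ => ?_⟩
      exact hsub (Set.mk_mem_prod hα.1 hβ.2)
    choose S hSF hSsmall using key
    haveI : F.NeBot := hF.1
    -- choose, for each a, an exponent and an endomorphism
    choose nn hnn using hA
    have hne : ∀ n, (S n).Nonempty := fun n => Filter.nonempty_of_mem (hSF n)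
    choose g hg using hne
    -- the limit function
    set f : A → A := fun a => g (nn a) a with hfdef
    have hkey : ∀ (a : A) (m : ℕ), p ^ m • a = 0 → ∀ α ∈ S m, α a = f a := by
      intro a m hm α hα
      obtain ⟨γ, hγ⟩ := Filter.nonempty_of_mem (Filter.inter_mem (hSF m) (hSF (nn a)))
      have h1 : (γ - α) a = 0 := hSsmall m α hα γ hγ.1 a hm
      have h2 : (γ - g (nn a)) a = 0 :=
        hSsmall (nn a) (g (nn a)) (hg (nn a)) γ hγ.2 a (hnn a)
      have e1 : γ a - α a = 0 := h1
      have e2 : γ a - g (nn a) a = 0 := h2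
      have h3 : α a = γ a := (sub_eq_zero.mp e1).symm
      rw [h3]
      exact sub_eq_zero.mp e2
    have hkill : ∀ (a : A) (m : ℕ), nn a ≤ m → p ^ m • a = 0 := by
      intro a m hm
      have : p ^ m • a = p ^ (m - nn a) • p ^ nn a • a := by
        rw [← mul_smul, ← pow_add, Nat.sub_add_cancel hm]
      rw [this, hnn a, smul_zero]
    have hadd : ∀ a b : A, f (a + b) = f a + f b := by
      intro a b
      set m := max (nn a) (max (nn b) (nn (a + b))) with hm
      have ha : p ^ m • a = 0 := hkill a m (le_max_left _ _)
      have hb : p ^ m • b = 0 := hkill b m (le_trans (le_max_left _ _) (le_max_right _ _))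
      have hab : p ^ m • (a + b) = 0 :=
        hkill (a + b) m (le_trans (le_max_right _ _) (le_max_right _ _))
      have h1 := hkey a m ha (g m) (hg m)
      have h2 := hkey b m hb (g m) (hg m)
      have h3 := hkey (a + b) m hab (g m) (hg m)
      rw [← h1, ← h2, ← h3, map_add]
    set F0 : AddMonoid.End A := AddMonoidHom.mk' f hadd with hF0
    refine ⟨F0, ?_⟩
    -- convergence: F ≤ 𝓝 F0
    have hnhdsF0 : @nhds _ t F0 = Filter.map (fun β => F0 + β) (@nhds _ t 0) := by
      exact (map_add_left_nhds_zero F0).symm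
    rw [show u.toTopologicalSpace = t from rfl] at *
    rw [hnhdsF0]
    intro s hs
    rw [Filter.mem_map] at hs
    have hs' : (fun β => F0 + β) ⁻¹' s ∈ @nhds _ t 0 := hs
    obtain ⟨n, hn⟩ := (hnhds _).mp hs'
    refine Filter.mem_of_superset (hSF n) ?_
    intro β hβ
    have : β - F0 ∈ liebertSet p A n := by
      intro a ha
      have h1 : (g n) a = f a := hkey a n ha (g n) (hg n)
      have h2 : (β - g n) a = 0 := hSsmall n (g n) (hg n) β hβ a ha
      have e2 : β a - g n a = 0 := h2
      show β a - F0 a = 0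
      have : F0 a = f a := rfl
      rw [this, ← h1]
      exact e2
    have := hn this
    have : F0 + (β - F0) ∈ s := this
    simpa using this
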